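/- Let a ≤ b be real numbers and let α ∈ (0,1]. For a Borel probability measure μ supported on [a,b], define CVaR_α(μ) = sup_{ν ∈ ℝ} ( ν − (1/α) ∫_{[a,b]} max(ν − x, 0) dμ(x) ). Then for all Borel probability measures μ, ν supported on [a,b] with CDFs F_μ, F_ν: |CVaR_α(μ) − CVaR_α(ν)| ≤ (1/α) · ∫_ℝ |F_μ(t) − F_ν(t)| dt. -/

import Mathlib

open MeasureTheory

noncomputable def CVaR (α a b : ℝ) (μ : Measure ℝ) : ℝ :=
  ⨆ v : ℝ, (v - (1 / α) * ∫ x in Set.Icc a b, max (v - x) 0 ∂μ)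

section Aux

variable {a b : ℝ}

private lemma F_meas (μ : Measure ℝ) [IsProbabilityMeasure μ] :
    Measurable (fun t => (μ (Set.Iic t)).toReal) :=
  Monotone.measurable (fun s t hst =>
    ENNReal.toReal_mono (measure_ne_top μ _) (measure_mono (Set.Iic_subset_Iic.2 hst)))

private lemma F_le_one (μ : Measure ℝ) [IsProbabilityMeasure μ] (t : ℝ) :
    (μ (Set.Iic t)).toReal ≤ 1 := by
  simpa using ENNReal.toReal_mono (by simp) (prob_le_one (μ := μ) (s := Set.Iic t))

private lemma F_zero (μ : Measure ℝ) [IsProbabilityMeasure μ]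
    (hμ : μ (Set.Icc a b) = 1) {t : ℝ} (ht : t < a) : μ (Set.Iic t) = 0 := by
  have hc : μ (Set.Icc a b)ᶜ = 0 := by
    rw [measure_compl measurableSet_Icc (measure_ne_top μ _), hμ, measure_univ, tsub_self]
  refine measure_mono_null (fun x hx => ?_) hc
  simp only [Set.mem_compl_iff, Set.mem_Icc, not_and_or, not_le]
  exact Or.inl (lt_of_le_of_lt hx ht)

private lemma F_one (μ : Measure ℝ) [IsProbabilityMeasure μ] (hab : a ≤ b)
    (hμ : μ (Set.Icc a b) = 1) {t : ℝ} (ht : b ≤ t) : μ (Set.Iic t) = 1 := by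
  refine le_antisymm prob_le_one ?_
  calc (1 : ENNReal) = μ (Set.Icc a b) := hμ.symm
    _ ≤ μ (Set.Iic t) := measure_mono (fun x hx => le_trans hx.2 ht)

/-- Integrability of the CDF on `Iio v`. -/
private lemma F_integrableOn (μ : Measure ℝ) [IsProbabilityMeasure μ]
    (hμ : μ (Set.Icc a b) = 1) (v : ℝ) :
    IntegrableOn (fun t => (μ (Set.Iic t)).toReal) (Set.Iio v) := by
  have hg : Integrable ((Set.Icc a v).indicator (fun _ => (1:ℝ))) := by
    rw [integrable_indicator_iff measurableSet_Icc]
    exact integrableOn_const (by simp [Real.volume_Icc, ENNReal.ofReal_lt_top])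
  refine Integrable.mono' hg.integrableOn ((F_meas μ).aestronglyMeasurable.restrict) ?_
  rw [ae_restrict_iff' measurableSet_Iio]
  refine Filter.Eventually.of_forall (fun t ht => ?_)
  rcases le_or_gt a t with h | h
  · have : t ∈ Set.Icc a v := ⟨h, le_of_lt ht⟩
    simp only [Set.indicator_of_mem this, Real.norm_eq_abs,
      abs_of_nonneg ENNReal.toReal_nonneg]
    exact F_le_one μ t
  · rw [F_zero μ hμ h]
    simpa using Set.indicator_nonneg (fun x _ => (zero_le_one : (0:ℝ) ≤ 1)) t

/-- Integrability of `|F_μ - F_ν|` on all of `ℝ`. -/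
private lemma absdiff_integrable (μ ν : Measure ℝ) [IsProbabilityMeasure μ]
    [IsProbabilityMeasure ν] (hab : a ≤ b) (hμ : μ (Set.Icc a b) = 1)
    (hν : ν (Set.Icc a b) = 1) :
    Integrable (fun t => |(μ (Set.Iic t)).toReal - (ν (Set.Iic t)).toReal|) := by
  have hg : Integrable ((Set.Icc a b).indicator (fun _ => (1:ℝ))) := by
    rw [integrable_indicator_iff measurableSet_Icc]
    exact integrableOn_const (by simp [Real.volume_Icc, ENNReal.ofReal_lt_top])
  refine Integrable.mono' hg (((F_meas μ).sub (F_meas ν)).abs.aestronglyMeasurable) ?_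
  refine Filter.Eventually.of_forall (fun t => ?_)
  rw [Real.norm_eq_abs, abs_abs]
  rcases lt_or_ge t a with h | h
  · rw [F_zero μ hμ h, F_zero ν hν h]
    simpa using Set.indicator_nonneg (fun x _ => (zero_le_one : (0:ℝ) ≤ 1)) t
  rcases le_or_gt b t with h' | h'
  · rw [F_one μ hab hμ h', F_one ν hab hν h']
    simpa using Set.indicator_nonneg (fun x _ => (zero_le_one : (0:ℝ) ≤ 1)) t
  · have : t ∈ Set.Icc a b := ⟨h, le_of_lt h'⟩
    rw [Set.indicator_of_mem this]
    rw [abs_sub_le_iff]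
    constructor
    · linarith [F_le_one μ t, ENNReal.toReal_nonneg (a := ν (Set.Iic t))]
    · linarith [F_le_one ν t, ENNReal.toReal_nonneg (a := μ (Set.Iic t))]

private lemma ae_no_atom (μ : Measure ℝ) [IsProbabilityMeasure μ] :
    ∀ᵐ s : ℝ, μ {s} = 0 := by
  have hc : Set.Countable {t : ℝ | 0 < μ {x : ℝ | x = t}} :=
    Measure.countable_meas_level_set_pos (measurable_id (α := ℝ))
  have : Set.Countable {t : ℝ | μ {t} ≠ 0} := by
    refine hc.mono (fun t ht => ?_)
    simp only [Set.mem_setOf_eq] at ht ⊢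
    have : {x : ℝ | x = t} = {t} := by ext x; simp
    rw [this]
    exact pos_iff_ne_zero.2 ht
  have h0 : (volume : Measure ℝ) {t : ℝ | μ {t} ≠ 0} = 0 :=
    Set.Countable.measure_zero this _
  exact (ae_iff).2 h0

/-- The key layer-cake identity. -/
private lemma G_eq (μ : Measure ℝ) [IsProbabilityMeasure μ]
    (hμ : μ (Set.Icc a b) = 1) (v : ℝ) :
    ∫ x in Set.Icc a b, max (v - x) 0 ∂μ
      = ∫ t in Set.Iio v, (μ (Set.Iic t)).toReal := by
  have hmem : ∀ᵐ x ∂μ, x ∈ Set.Icc a b := by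
    have hc : μ (Set.Icc a b)ᶜ = 0 := by
      rw [measure_compl measurableSet_Icc (measure_ne_top μ _), hμ, measure_univ, tsub_self]
    exact ae_iff.mpr hc
  have hres : μ.restrict (Set.Icc a b) = μ := Measure.restrict_eq_self_of_ae_mem hmem
  rw [hres]
  have hf_int : Integrable (fun x => max (v - x) 0) μ := by
    refine Integrable.mono' (integrable_const (max (v - a) 0))
      ((continuous_const.sub continuous_id).max continuous_const).aestronglyMeasurable ?_
    filter_upwards [hmem] with x hx
    rw [Real.norm_eq_abs, abs_of_nonneg (le_max_right _ _)]
    exact max_le_max (by linarith [hx.1]) le_rfl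
  rw [hf_int.integral_eq_integral_meas_lt
      (Filter.Eventually.of_forall (fun x => le_max_right _ _))]
  have hset : ∀ t ∈ Set.Ioi (0:ℝ),
      (μ {x : ℝ | t < max (v - x) 0}).toReal = (μ (Set.Iio (v - t))).toReal := by
    intro t ht
    congr 2
    ext x
    simp only [Set.mem_setOf_eq, lt_max_iff, Set.mem_Iio]
    constructor
    · rintro (h | h)
      · linarith
      · exact absurd h (not_lt.2 (le_of_lt ht))
    · intro h; exact Or.inl (by linarith)
  rw [setIntegral_congr_fun measurableSet_Ioi (f := fun t => μ.real {x | t < max (v - x) 0}) hset]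
  -- change of variables t ↦ v - t
  have A : MeasurableEmbedding (fun t : ℝ => v - t) :=
    (Homeomorph.trans (Homeomorph.neg ℝ) (Homeomorph.addLeft v)).isClosedEmbedding.measurableEmbedding
  have hmap : Measure.map (fun t : ℝ => v - t) volume = volume :=
    (Measure.measurePreserving_sub_left volume v).map_eq
  have key := A.setIntegral_map (μ := volume)
    (fun s => (μ (Set.Iio s)).toReal) (Set.Iio v)
  rw [hmap] at key
  have hpre : (fun t : ℝ => v - t) ⁻¹' Set.Iio v = Set.Ioi 0 := by
    ext t; simp [sub_lt_iff_lt_add]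
  rw [hpre] at key
  rw [← key]
  -- now replace Iio by Iic a.e.
  refine integral_congr_ae ?_
  filter_upwards [ae_restrict_of_ae (ae_no_atom μ)] with s hs
  congr 1
  refine le_antisymm (measure_mono Set.Iio_subset_Iic_self) ?_
  calc μ (Set.Iic s) ≤ μ (Set.Iio s ∪ {s}) := by
        refine measure_mono (fun x hx => ?_)
        rcases lt_or_eq_of_le (Set.mem_Iic.mp hx) with h | h
        · exact Or.inl h
        · exact Or.inr (by simp [h])
    _ ≤ μ (Set.Iio s) + μ {s} := measure_union_le _ _
    _ = μ (Set.Iio s) := by rw [hs, add_zero]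

end Aux

/-- Lipschitz continuity of CVaR at level `α ∈ (0, 1]` with respect to the ℓ1 distance
of CDFs, with Lipschitz constant `1 / α`. -/
theorem cvar_lipschitz_l1
    (a b : ℝ) (hab : a ≤ b) (α : ℝ) (hα : α ∈ Set.Ioc (0 : ℝ) 1)
    (μ ν : Measure ℝ) [IsProbabilityMeasure μ] [IsProbabilityMeasure ν]
    (hμ : μ (Set.Icc a b) = 1) (hν : ν (Set.Icc a b) = 1) :
    |CVaR α a b μ - CVaR α a b ν| ≤
      (1 / α) * ∫ t : ℝ, |(μ (Set.Iic t)).toReal - (ν (Set.Iic t)).toReal| := by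
  obtain ⟨hα0, hα1⟩ := hα
  set c : ℝ := 1 / α with hc
  have hc1 : 1 ≤ c := by rw [hc, le_div_iff₀ hα0]; linarith
  have hc0 : 0 ≤ c := le_trans zero_le_one hc1
  set L : ℝ := ∫ t : ℝ, |(μ (Set.Iic t)).toReal - (ν (Set.Iic t)).toReal| with hL
  -- difference of G's bounded by L
  have hGdiff : ∀ (ρ σ : Measure ℝ) [IsProbabilityMeasure ρ] [IsProbabilityMeasure σ],
      ρ (Set.Icc a b) = 1 → σ (Set.Icc a b) = 1 → ∀ v : ℝ,
      (∫ x in Set.Icc a b, max (v - x) 0 ∂σ) - (∫ x in Set.Icc a b, max (v - x) 0 ∂ρ)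
        ≤ ∫ t : ℝ, |(ρ (Set.Iic t)).toReal - (σ (Set.Iic t)).toReal| := by
    intro ρ σ _ _ hρ hσ v
    rw [G_eq ρ hρ v, G_eq σ hσ v]
    have h1 := F_integrableOn (a := a) (b := b) ρ hρ v
    have h2 := F_integrableOn (a := a) (b := b) σ hσ v
    rw [← integral_sub h2 h1]
    calc ∫ t in Set.Iio v, ((σ (Set.Iic t)).toReal - (ρ (Set.Iic t)).toReal)
        ≤ ∫ t in Set.Iio v, |(ρ (Set.Iic t)).toReal - (σ (Set.Iic t)).toReal| := by
          refine integral_mono (h2.sub h1) ((absdiff_integrable ρ σ hab hρ hσ).integrableOn)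
            (fun t => ?_)
          rw [abs_sub_comm]
          exact le_abs_self _
      _ ≤ ∫ t : ℝ, |(ρ (Set.Iic t)).toReal - (σ (Set.Iic t)).toReal| :=
          setIntegral_le_integral (absdiff_integrable ρ σ hab hρ hσ)
            (Filter.Eventually.of_forall (fun t => abs_nonneg _))
  -- boundedness above of the defining family
  have hbdd : ∀ (ρ : Measure ℝ) [IsProbabilityMeasure ρ], ρ (Set.Icc a b) = 1 →
      ∀ v : ℝ, v - c * ∫ x in Set.Icc a b, max (v - x) 0 ∂ρ ≤ b := by
    intro ρ _ hρ v
    rw [G_eq ρ hρ v]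
    have hFnn : ∀ t, 0 ≤ (ρ (Set.Iic t)).toReal := fun t => ENNReal.toReal_nonneg
    have hGnn : 0 ≤ ∫ t in Set.Iio v, (ρ (Set.Iic t)).toReal :=
      setIntegral_nonneg measurableSet_Iio (fun t _ => hFnn t)
    rcases le_or_gt v b with h | h
    · nlinarith
    · have hsub : ∫ t in Set.Ico b v, (ρ (Set.Iic t)).toReal
          ≤ ∫ t in Set.Iio v, (ρ (Set.Iic t)).toReal := by
        refine setIntegral_mono_set (F_integrableOn (a := a) (b := b) ρ hρ v)
          (Filter.Eventually.of_forall (fun t => hFnn t))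
          (Filter.Eventually.of_forall (fun t ht => ht.2))
      have hone : ∫ t in Set.Ico b v, (ρ (Set.Iic t)).toReal = v - b := by
        rw [setIntegral_congr_fun measurableSet_Ico
          (g := fun _ => (1:ℝ)) (fun t ht => by
            simp [F_one ρ hab hρ ht.1])]
        simp [Real.volume_Ico, ENNReal.toReal_ofReal (by linarith : (0:ℝ) ≤ v - b), h.le]
      nlinarith
  have hne : ∀ (ρ : Measure ℝ), (Set.range fun v : ℝ =>
      v - c * ∫ x in Set.Icc a b, max (v - x) 0 ∂ρ).Nonempty := fun ρ => Set.range_nonempty _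
  have hLnn : 0 ≤ L := integral_nonneg (fun t => abs_nonneg _)
  -- absolute difference of G's bounded by L
  have hGabs : ∀ v : ℝ,
      |(∫ x in Set.Icc a b, max (v - x) 0 ∂μ) - (∫ x in Set.Icc a b, max (v - x) 0 ∂ν)| ≤ L := by
    intro v
    rw [abs_sub_le_iff]
    constructor
    · have := hGdiff ν μ hν hμ v
      calc (∫ x in Set.Icc a b, max (v - x) 0 ∂μ) - (∫ x in Set.Icc a b, max (v - x) 0 ∂ν)
          ≤ ∫ t : ℝ, |(ν (Set.Iic t)).toReal - (μ (Set.Iic t)).toReal| := this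
        _ = L := by rw [hL]; simp_rw [abs_sub_comm]
    · exact hGdiff μ ν hμ hν v
  -- one-sided bound
  have main : ∀ (ρ σ : Measure ℝ) [IsProbabilityMeasure ρ] [IsProbabilityMeasure σ],
      ρ (Set.Icc a b) = 1 → σ (Set.Icc a b) = 1 →
      (∀ v : ℝ, (∫ x in Set.Icc a b, max (v - x) 0 ∂σ)
          - (∫ x in Set.Icc a b, max (v - x) 0 ∂ρ) ≤ L) →
      CVaR α a b ρ - CVaR α a b σ ≤ c * L := by
    intro ρ σ _ _ hρ hσ hdiff
    rw [sub_le_iff_le_add]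
    unfold CVaR
    rw [← hc]
    have hbddσ : BddAbove (Set.range fun v : ℝ =>
        v - c * ∫ x in Set.Icc a b, max (v - x) 0 ∂σ) :=
      ⟨b, by rintro _ ⟨v, rfl⟩; exact hbdd σ hσ v⟩
    refine ciSup_le (fun v => ?_)
    have h1 : v - c * ∫ x in Set.Icc a b, max (v - x) 0 ∂ρ
        ≤ c * L + (v - c * ∫ x in Set.Icc a b, max (v - x) 0 ∂σ) := by
      nlinarith [mul_le_mul_of_nonneg_left (hdiff v) hc0]
    exact le_trans h1 ((add_le_add_iff_left (c * L)).2 (le_ciSup hbddσ v))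
  rw [abs_sub_le_iff]
  constructor
  · exact main μ ν hμ hν (fun v => le_trans (by rw [← neg_sub]; exact neg_le_abs _) (hGabs v))
  · exact main ν μ hν hμ (fun v => le_trans (le_abs_self _) (hGabs v))
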